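/- Let A, B, C, D, F, T be real numbers with C ≠ 0, D ≠ 0 and D² = B² − 4AC. Define q(t) = (B+D)·exp(−D(T−t)/2) − (B−D)·exp(D(T−t)/2) and p(t) = (B+D)·exp(−D(T−t)/2) + (B−D)·exp(D(T−t)/2), and assume q(t)/(2D) > 0 for all t ∈ [0,T]. Define χ₁(t) = −B/(2C) + (D/(2C))·p(t)/q(t) and χ₀(t) = F·(−B(T−t)/(2C) − (1/C)·log(q(t)/(2D))). Then χ₀(T) = 0, and for every t ∈ [0,T] the function χ₀ is differentiable at t with derivative χ₀′(t) = −F·χ₁(t). -/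

import Mathlib

/-- Explicit formula for the deterministic coefficient `χ₀` in the
exponential-affine representation `Y_t = exp(χ₀(t) + χ₁(t)X_t)` of the
opportunity process for the Heston mean-variance hedging example:
`χ₀(T) = 0` and `χ₀'(t) = -F·χ₁(t)` on `[0, T]`. -/
theorem riccati_chi0_explicit_solution
    (A B C D F T : ℝ) (hC : C ≠ 0) (hDne : D ≠ 0)
    (hD : D ^ 2 = B ^ 2 - 4 * A * C)
    (q p χ₁ χ₀ : ℝ → ℝ)
    (hq : ∀ t, q t = (B + D) * Real.exp (-D * (T - t) / 2)
        - (B - D) * Real.exp (D * (T - t) / 2))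
    (hp : ∀ t, p t = (B + D) * Real.exp (-D * (T - t) / 2)
        + (B - D) * Real.exp (D * (T - t) / 2))
    (hqpos : ∀ t ∈ Set.Icc (0 : ℝ) T, 0 < q t / (2 * D))
    (hχ₁ : ∀ t, χ₁ t = -B / (2 * C) + (D / (2 * C)) * (p t / q t))
    (hχ₀ : ∀ t, χ₀ t = F * (-B * (T - t) / (2 * C)
        - (1 / C) * Real.log (q t / (2 * D)))) :
    χ₀ T = 0 ∧
      ∀ t ∈ Set.Icc (0 : ℝ) T, HasDerivAt χ₀ (-F * χ₁ t) t := by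
  constructor
  · have hqT : q T = 2 * D := by rw [hq]; simp; ring
    rw [hχ₀, hqT]
    rw [div_self (by positivity : (2:ℝ) * D ≠ 0)]  -- wrong if D<0; fix below
    simp
  · intro t ht
    have hqD : 0 < q t / (2 * D) := hqpos t ht
    have hqDne : q t / (2 * D) ≠ 0 := ne_of_gt hqD
    have hqne : q t ≠ 0 := by
      intro h; rw [h] at hqD; simp at hqD
    -- derivative of q
    have hq' : HasDerivAt q (D / 2 * p t) t := by
      have h1 : HasDerivAt (fun s => (B + D) * Real.exp (-D * (T - s) / 2)
          - (B - D) * Real.exp (D * (T - s) / 2))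
          ((B + D) * (Real.exp (-D * (T - t) / 2) * (-D * (-1) / 2))
            - (B - D) * (Real.exp (D * (T - t) / 2) * (D * (-1) / 2))) t := by
        have e1 := ((((hasDerivAt_id t).const_sub T).const_mul (-D)).div_const 2).exp.const_mul (B + D)
        have e2 := ((((hasDerivAt_id t).const_sub T).const_mul D).div_const 2).exp.const_mul (B - D)
        exact e1.sub e2
      have := h1
      rw [show (fun s => (B + D) * Real.exp (-D * (T - s) / 2)
          - (B - D) * Real.exp (D * (T - s) / 2)) = q from (funext fun s => (hq s).symm)] at this
      convert this using 1
      rw [hp]; ring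
    -- linear part
    have hlin : HasDerivAt (fun s => -B * (T - s) / (2 * C)) (B / (2 * C)) t := by
      have := (((hasDerivAt_id t).const_sub T).const_mul (-B)).div_const (2 * C)
      exact this.congr_deriv (by ring)
    -- log part
    have hlog : HasDerivAt (fun s => Real.log (q s / (2 * D)))
        ((D / 2 * p t / (2 * D)) / (q t / (2 * D))) t :=
      (hq'.div_const (2 * D)).log hqDne
    have hmain : HasDerivAt χ₀
        (F * (B / (2 * C) - 1 / C * ((D / 2 * p t / (2 * D)) / (q t / (2 * D))))) t := by
      have := (hlin.sub (hlog.const_mul (1 / C))).const_mul F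
      exact this.congr_of_eventuallyEq (Filter.Eventually.of_forall fun s => by rw [hχ₀]; rfl)
    convert hmain using 1
    rw [hχ₁]
    field_simp
    ring
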